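/- Let p > 3 be a prime and d ∈ F_p with d ≠ −2, d ≠ 0 and d³ ≠ 1. Set k = (4/3)(d² + d + 1) ∈ F_p and λ = (d+2)³/(3k) ∈ F_p. If there exists c ∈ F_p with c ≠ 0 and c² = k/(d+2), then #{(x, y) ∈ F_p × F_p : y² = x³ + ((d+2)x + k)²} = #{(x, y) ∈ F_p × F_p : y² = x³ + 3λ(x + 1)²}. -/

import Mathlib

theorem tildeE_count_eq_dik_count (p : ℕ) [Fact p.Prime] (hp : 3 < p)
    (d : ZMod p) (hd2 : d ≠ -2) (hd0 : d ≠ 0) (hd : d ^ 3 ≠ 1)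
    (k : ZMod p) (hk : k = 4 / 3 * (d ^ 2 + d + 1))
    (l : ZMod p) (hl : l = (d + 2) ^ 3 / (3 * k))
    (hc : ∃ c : ZMod p, c ≠ 0 ∧ c ^ 2 = k / (d + 2)) :
    (Finset.univ.filter (fun xy : ZMod p × ZMod p =>
        xy.2 ^ 2 = xy.1 ^ 3 + ((d + 2) * xy.1 + k) ^ 2)).card =
      (Finset.univ.filter (fun xy : ZMod p × ZMod p =>
        xy.2 ^ 2 = xy.1 ^ 3 + 3 * l * (xy.1 + 1) ^ 2)).card := by
  obtain ⟨c, hc0, hc2⟩ := hc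
  have hd2' : d + 2 ≠ 0 := fun h => hd2 (by linear_combination h)
  have hq : d ^ 2 + d + 1 ≠ 0 := fun h => hd (by linear_combination (d - 1) * h)
  have h3 : (3 : ZMod p) ≠ 0 := by
    intro h
    have h' : ((3 : ℕ) : ZMod p) = 0 := by exact_mod_cast h
    have := (ZMod.natCast_eq_zero_iff 3 p).mp h'
    have := Nat.le_of_dvd (by norm_num) this
    omega
  have h4 : (4 : ZMod p) ≠ 0 := by
    intro h
    have h' : ((4 : ℕ) : ZMod p) = 0 := by exact_mod_cast h
    have hdvd := (ZMod.natCast_eq_zero_iff 4 p).mp h'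
    have hle := Nat.le_of_dvd (by norm_num) hdvd
    interval_cases p
    · have h4p : Nat.Prime 4 := Fact.out
      norm_num at h4p
  have hk0 : k ≠ 0 := by
    rw [hk]; exact mul_ne_zero (div_ne_zero h4 h3) hq
  have hkc : k = c ^ 2 * (d + 2) := by
    rw [eq_div_iff hd2'] at hc2; linear_combination -hc2
  have hlval : 3 * l = (d + 2) ^ 2 / c ^ 2 := by
    rw [hl, hkc]
    field_simp
  refine Finset.card_bij' (fun a _ => ((a.1 / c ^ 2, a.2 / c ^ 3) : ZMod p × ZMod p))
    (fun a _ => ((c ^ 2 * a.1, c ^ 3 * a.2) : ZMod p × ZMod p)) ?_ ?_ ?_ ?_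
  · intro a ha
    simp only [Finset.mem_filter, Finset.mem_univ, true_and] at ha ⊢
    rw [hkc] at ha
    rw [hlval]
    field_simp
    linear_combination ha
  · intro a ha
    simp only [Finset.mem_filter, Finset.mem_univ, true_and] at ha ⊢
    rw [hlval] at ha
    rw [hkc]
    field_simp at ha
    linear_combination c ^ 4 * ha
  · intro a ha
    ext <;> field_simp
  · intro a ha
    ext <;> field_simp
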